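/- In the real/complex cone setup, for any h ∈ 𝒞_ℂ and any ℓ ∈ 𝒞'_ℂ, one has |ℓ(h)| ≥ e^{−δ_𝒞(h, 𝕖)} · (κ/√2) · ‖h‖ · |ℓ(𝕖)|. -/

import Mathlib

open Complex Set ENNReal

namespace ConeSetup

variable {B : Type*} [NormedAddCommGroup B] [NormedSpace ℝ B]

/-- Complex scalar multiplication on the complexification `B × B`:
`(a+ib)(x,y) = (ax − by, ay + bx)`. -/
def cSmul (z : ℂ) (p : B × B) : B × B :=
  (z.re • p.1 - z.im • p.2, z.re • p.2 + z.im • p.1)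

/-- The "real" norm `‖(x,y)‖_r = √(‖x‖² + ‖y‖²)` on the complexification. -/
noncomputable def rNorm (p : B × B) : ℝ :=
  Real.sqrt (‖p.1‖ ^ 2 + ‖p.2‖ ^ 2)

/-- The complexification norm `‖(x,y)‖ = sup_{θ∈[0,2π]} ‖e^{iθ}(x,y)‖_r`. -/
noncomputable def cNorm (p : B × B) : ℝ :=
  sSup ((fun θ : ℝ => rNorm (cSmul (Complex.exp (θ * Complex.I)) p)) ''
    Set.Icc 0 (2 * Real.pi))

/-- The real cone `𝒞_ℝ = {h ≠ 0 : ℓ(h) ≥ 0 for all ℓ ∈ S}`. -/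
def realCone (S : Set (B →L[ℝ] ℝ)) : Set B :=
  {h | h ≠ 0 ∧ ∀ ℓ ∈ S, 0 ≤ ℓ h}

/-- The complex cone `𝒞_ℂ = ℂ_* ⋅ (𝒞_ℝ + i 𝒞_ℝ)`. -/
def complexCone (S : Set (B →L[ℝ] ℝ)) : Set (B × B) :=
  {p | ∃ z : ℂ, z ≠ 0 ∧ ∃ x ∈ realCone S, ∃ y ∈ realCone S, p = cSmul z (x, y)}

/-- A map `B × B → ℂ` is a (continuous) complex-linear functional for the complex
structure `cSmul`. -/
def IsCLinearFunctional (ℓ : B × B → ℂ) : Prop :=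
  (∀ p q : B × B, ℓ (p + q) = ℓ p + ℓ q) ∧
  (∀ (z : ℂ) (p : B × B), ℓ (cSmul z p) = z * ℓ p) ∧
  Continuous ℓ

/-- The dual real cone `𝒞'_ℝ = {ℓ ∈ B'_ℝ : ℓ(h) ≥ 0 for all h ∈ 𝒞_ℝ}`. -/
def dualRealCone (S : Set (B →L[ℝ] ℝ)) : Set (B →L[ℝ] ℝ) :=
  {ℓ | ∀ h ∈ realCone S, 0 ≤ ℓ h}

/-- The dual complex cone `𝒞'_ℂ = {ℓ ∈ B'_ℂ : ℓ(h) ≠ 0 for all h ∈ 𝒞_ℂ}`. -/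
def dualComplexCone (S : Set (B →L[ℝ] ℝ)) : Set (B × B → ℂ) :=
  {ℓ | IsCLinearFunctional ℓ ∧ ∀ h ∈ complexCone S, ℓ h ≠ 0}

/-- The action of a real functional on the complexification: `ℓ(x+iy) = ℓ(x) + iℓ(y)`. -/
noncomputable def cext (ℓ : B →L[ℝ] ℝ) (p : B × B) : ℂ :=
  (ℓ p.1 : ℂ) + (ℓ p.2 : ℂ) * Complex.I

/-- `𝒞̊'_ℝ = {ℓ ∈ 𝒞'_ℝ : ℓ(x) > 0 for all x ∈ 𝒞_ℝ}`. -/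
def interiorDualRealCone (S : Set (B →L[ℝ] ℝ)) : Set (B →L[ℝ] ℝ) :=
  {ℓ | ℓ ∈ dualRealCone S ∧ ∀ x ∈ realCone S, 0 < ℓ x}

/-- `Ĉ'_ℂ = {±ℓ ± ip : ℓ, p ∈ 𝒞̊'_ℝ}`. -/
def hatDualComplexCone (S : Set (B →L[ℝ] ℝ)) : Set (B × B → ℂ) :=
  {q | ∃ ℓ ∈ interiorDualRealCone S, ∃ p ∈ interiorDualRealCone S,
    ∃ ε₁ ∈ ({1, -1} : Set ℝ), ∃ ε₂ ∈ ({1, -1} : Set ℝ),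
      q = fun v => (ε₁ : ℂ) * cext ℓ v + (ε₂ : ℂ) * Complex.I * cext p v}

/-- `E_𝒞(h,g) = {ℓ(h)/ℓ(g) : ℓ ∈ 𝒞'_ℂ}`. -/
def gaugeSet (S : Set (B →L[ℝ] ℝ)) (h g : B × B) : Set ℂ :=
  {z | ∃ ℓ ∈ dualComplexCone S, z = ℓ h / ℓ g}

/-- The projective gauge
`δ_𝒞(h,g) = ln( sup_{z∈E_𝒞(h,g)} |z| / inf_{z∈E_𝒞(h,g)} |z| ) = sup_{z,w∈E_𝒞(h,g)} ln|z/w|`,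
valued in `[0,∞]`. -/
noncomputable def deltaGauge (S : Set (B →L[ℝ] ℝ)) (h g : B × B) : ℝ≥0∞ :=
  ⨆ z ∈ gaugeSet S h g, ⨆ w ∈ gaugeSet S h g, ENNReal.ofReal (Real.log (‖z‖ / ‖w‖))

/-- The real/complex cone setup: a separating family `S` of functionals, an order unit `𝕖`
whose cone norm is the norm of `B`, and a functional `𝕞` in the weak-* closed convex hull
of `ℝ₊ ⋅ S` dominating the norm on the cone. -/
structure Setup (B : Type*) [NormedAddCommGroup B] [NormedSpace ℝ B] where
  S : Set (B →L[ℝ] ℝ)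
  e : B
  mm : B →L[ℝ] ℝ
  κ : ℝ
  separating : ∀ x : B, (∀ ℓ ∈ S, ℓ x = 0) → x = 0
  e_mem : e ∈ realCone S
  arch : ∀ h : B, ∃ l : ℝ, 0 ≤ l ∧ ∀ ℓ ∈ S, 0 ≤ ℓ (l • e - h)
  norm_eq : ∀ h : B,
    ‖h‖ = sInf {l : ℝ | 0 ≤ l ∧ ∀ ℓ ∈ S, 0 ≤ ℓ (l • e - h) ∧ 0 ≤ ℓ (l • e + h)}
  κ_pos : 0 < κ
  κ_lt_one : κ < 1
  mm_e : mm e = 1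
  mm_lower : ∀ h ∈ realCone S, κ * ‖h‖ ≤ mm h
  mm_star : (⇑mm : B → ℝ) ∈ closure ((fun ℓ : B →L[ℝ] ℝ => (⇑ℓ : B → ℝ)) ''
    convexHull ℝ {q : B →L[ℝ] ℝ | ∃ c : ℝ, 0 ≤ c ∧ ∃ ℓ ∈ S, q = c • ℓ})

section Aux
variable {B : Type*} [NormedAddCommGroup B] [NormedSpace ℝ B]

lemma cSmul_cSmul (w z : ℂ) (p : B × B) : cSmul w (cSmul z p) = cSmul (w * z) p := by
  simp only [cSmul, Complex.mul_re, Complex.mul_im, Prod.mk.injEq]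
  constructor <;> module

lemma norm_re_add_im_mul_I (a b : ℝ) : ‖(a : ℂ) + b * Complex.I‖ = Real.sqrt (a ^ 2 + b ^ 2) := by
  rw [Complex.norm_def, Complex.normSq_apply]
  simp
  ring_nf

lemma cext_apply (ℓ : B →L[ℝ] ℝ) (p : B × B) : cext ℓ p = (ℓ p.1 : ℂ) + (ℓ p.2 : ℂ) * Complex.I := rfl

lemma cext_smul (ℓ : B →L[ℝ] ℝ) (z : ℂ) (p : B × B) :
    cext ℓ (cSmul z p) = z * cext ℓ p := by
  apply Complex.ext <;>
    simp [cext, cSmul, map_sub, map_add, map_smul, Complex.mul_re, Complex.mul_im] <;> ring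

lemma rNorm_cSmul_le (z : ℂ) (p : B × B) :
    rNorm (cSmul z p) ≤ Real.sqrt 2 * ‖z‖ * rNorm p := by
  have h1 : ‖z.re • p.1 - z.im • p.2‖ ^ 2 ≤ (z.re ^ 2 + z.im ^ 2) * (‖p.1‖ ^ 2 + ‖p.2‖ ^ 2) := by
    have hb : ‖z.re • p.1 - z.im • p.2‖ ≤ |z.re| * ‖p.1‖ + |z.im| * ‖p.2‖ := by
      refine (norm_sub_le _ _).trans ?_
      simp [norm_smul]
    nlinarith [abs_nonneg z.re, abs_nonneg z.im, norm_nonneg p.1, norm_nonneg p.2,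
      _root_.sq_abs z.re, _root_.sq_abs z.im, norm_nonneg (z.re • p.1 - z.im • p.2),
      sq_nonneg (|z.re| * ‖p.2‖ - |z.im| * ‖p.1‖)]
  have h2 : ‖z.re • p.2 + z.im • p.1‖ ^ 2 ≤ (z.re ^ 2 + z.im ^ 2) * (‖p.1‖ ^ 2 + ‖p.2‖ ^ 2) := by
    have hb : ‖z.re • p.2 + z.im • p.1‖ ≤ |z.re| * ‖p.2‖ + |z.im| * ‖p.1‖ := by
      refine (norm_add_le _ _).trans ?_
      simp [norm_smul]
    nlinarith [abs_nonneg z.re, abs_nonneg z.im, norm_nonneg p.1, norm_nonneg p.2,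
      _root_.sq_abs z.re, _root_.sq_abs z.im, norm_nonneg (z.re • p.2 + z.im • p.1),
      sq_nonneg (|z.re| * ‖p.1‖ - |z.im| * ‖p.2‖)]
  have key : rNorm (cSmul z p) ≤
      Real.sqrt (2 * ((z.re ^ 2 + z.im ^ 2) * (‖p.1‖ ^ 2 + ‖p.2‖ ^ 2))) := by
    apply Real.sqrt_le_sqrt
    simp only [cSmul]
    nlinarith [h1, h2]
  refine key.trans_eq ?_
  rw [Real.sqrt_mul (by norm_num), Real.sqrt_mul (by positivity)]
  have : Real.sqrt (z.re ^ 2 + z.im ^ 2) = ‖z‖ := by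
    rw [Complex.norm_def, Complex.normSq_apply]; ring_nf
  rw [this, rNorm, mul_assoc]

lemma cNorm_cSmul_le (z : ℂ) (p : B × B) :
    cNorm (cSmul z p) ≤ Real.sqrt 2 * ‖z‖ * rNorm p := by
  apply Real.sSup_le
  · rintro r ⟨θ, _, rfl⟩
    simp only
    rw [cSmul_cSmul]
    refine (rNorm_cSmul_le _ _).trans_eq ?_
    rw [norm_mul, Complex.norm_exp_ofReal_mul_I, one_mul]
  · have : (0:ℝ) ≤ rNorm p := Real.sqrt_nonneg _
    positivity

end Aux

/-- The complexified `𝕞` lies in the dual complex cone. -/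
lemma cext_mm_mem (st : Setup B) [CompleteSpace B] :
    cext st.mm ∈ dualComplexCone st.S := by
  have hpos : ∀ x ∈ realCone st.S, 0 < st.mm x := by
    intro x hx
    have h1 : st.κ * ‖x‖ ≤ st.mm x := st.mm_lower x hx
    have h2 : 0 < ‖x‖ := norm_pos_iff.mpr hx.1
    nlinarith [st.κ_pos]
  refine ⟨⟨?_, ?_, ?_⟩, ?_⟩
  · intro p q
    simp only [cext_apply, Prod.fst_add, Prod.snd_add, map_add]
    push_cast; ring
  · exact cext_smul st.mm
  · unfold cext
    fun_prop
  · rintro p ⟨z, hz, x, hx, y, hy, rfl⟩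
    rw [cext_smul]
    refine mul_ne_zero hz ?_
    intro hc
    have hre : (cext st.mm (x, y)).re = st.mm x := by simp [cext_apply]
    rw [hc] at hre
    exact absurd hre.symm (ne_of_gt (hpos x hx))

lemma e_mem_complexCone (st : Setup B) : (st.e, (0 : B)) ∈ complexCone st.S := by
  refine ⟨(1/2 : ℂ) - (1/2) * Complex.I, ?_, st.e, st.e_mem, st.e, st.e_mem, ?_⟩
  · intro hc
    have := congrArg Complex.re hc
    simp at this
  · have hre : ((1/2 : ℂ) - (1/2) * Complex.I).re = 1/2 := by simp
    have him : ((1/2 : ℂ) - (1/2) * Complex.I).im = -(1/2) := by simp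
    simp only [cSmul, hre, him, Prod.mk.injEq]
    constructor <;> module

/-- **Lemma 5.15 (partial converse to the dual norm bound).** For `h ∈ 𝒞_ℂ` and
`ℓ ∈ 𝒞'_ℂ`, `|ℓ(h)| ≥ e^{−δ_𝒞(h,𝕖)} (κ/√2) ‖h‖ |ℓ(𝕖)|` (trivially true when
`δ_𝒞(h,𝕖) = ∞`). -/
theorem dual_functional_lower_bound {B : Type*} [NormedAddCommGroup B]
    [NormedSpace ℝ B] [CompleteSpace B] (st : Setup B) :
    ∀ h ∈ complexCone st.S, ∀ ℓ ∈ dualComplexCone st.S,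
      deltaGauge st.S h (st.e, (0 : B)) = ⊤ ∨
      Real.exp (-(deltaGauge st.S h (st.e, (0 : B))).toReal) * (st.κ / Real.sqrt 2) *
          cNorm h * ‖ℓ (st.e, (0 : B))‖ ≤ ‖ℓ h‖ := by
  intro h hh ℓ hℓ
  by_cases hδ : deltaGauge st.S h (st.e, (0 : B)) = ⊤
  · exact Or.inl hδ
  right
  set g : B × B := (st.e, (0 : B)) with hg
  have hgC : g ∈ complexCone st.S := e_mem_complexCone st
  have hℓ0 : cext st.mm ∈ dualComplexCone st.S := cext_mm_mem st
  have hℓg : ℓ g ≠ 0 := hℓ.2 g hgC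
  have hℓh : ℓ h ≠ 0 := hℓ.2 h hh
  have h0g : cext st.mm g = 1 := by
    simp [cext_apply, hg, st.mm_e]
  have h0h : cext st.mm h ≠ 0 := hℓ0.2 h hh
  set z₀ : ℂ := cext st.mm h / cext st.mm g with hz₀def
  set w : ℂ := ℓ h / ℓ g with hwdef
  have hz₀mem : z₀ ∈ gaugeSet st.S h g := ⟨_, hℓ0, rfl⟩
  have hwmem : w ∈ gaugeSet st.S h g := ⟨_, hℓ, rfl⟩
  have hz₀ : z₀ = cext st.mm h := by rw [hz₀def, h0g, div_one]
  have hz₀ne : z₀ ≠ 0 := by rw [hz₀]; exact h0h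
  have hwne : w ≠ 0 := div_ne_zero hℓh hℓg
  set d : ℝ := (deltaGauge st.S h g).toReal with hd
  have hkey : ENNReal.ofReal (Real.log (‖z₀‖ / ‖w‖)) ≤ deltaGauge st.S h g :=
    le_iSup₂_of_le z₀ hz₀mem (le_iSup₂_of_le w hwmem le_rfl)
  have hlog : Real.log (‖z₀‖ / ‖w‖) ≤ d := by
    rcases le_or_gt (Real.log (‖z₀‖ / ‖w‖)) 0 with hc | hc
    · exact hc.trans ENNReal.toReal_nonneg
    · have := ENNReal.toReal_mono hδ hkey
      rwa [ENNReal.toReal_ofReal hc.le] at this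
  have hwpos : 0 < ‖w‖ := norm_pos_iff.mpr hwne
  have hratio : ‖z₀‖ / ‖w‖ ≤ Real.exp d :=
    (Real.log_le_iff_le_exp (div_pos (norm_pos_iff.mpr hz₀ne) hwpos)).mp hlog
  have hB : Real.exp (-d) * ‖z₀‖ ≤ ‖w‖ := by
    rw [div_le_iff₀ hwpos] at hratio
    rw [Real.exp_neg, inv_mul_le_iff₀ (Real.exp_pos d)]
    exact hratio
  -- lower bound on ‖z₀‖
  obtain ⟨z, hz, x, hx, y, hy, rfl⟩ := hh
  have hmx : st.κ * ‖x‖ ≤ st.mm x := st.mm_lower x hx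
  have hmy : st.κ * ‖y‖ ≤ st.mm y := st.mm_lower y hy
  have hκx : 0 ≤ st.κ * ‖x‖ := mul_nonneg st.κ_pos.le (norm_nonneg _)
  have hκy : 0 ≤ st.κ * ‖y‖ := mul_nonneg st.κ_pos.le (norm_nonneg _)
  have hnorm : ‖z₀‖ = ‖z‖ * Real.sqrt ((st.mm x) ^ 2 + (st.mm y) ^ 2) := by
    rw [hz₀, cext_smul, norm_mul, cext_apply]
    simp only
    rw [norm_re_add_im_mul_I]
  have hsq : st.κ * rNorm (x, y) ≤ Real.sqrt ((st.mm x) ^ 2 + (st.mm y) ^ 2) := by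
    have heq : st.κ * rNorm (x, y) =
        Real.sqrt ((st.κ * ‖x‖) ^ 2 + (st.κ * ‖y‖) ^ 2) := by
      rw [rNorm, show (st.κ * ‖x‖) ^ 2 + (st.κ * ‖y‖) ^ 2
          = st.κ ^ 2 * (‖x‖ ^ 2 + ‖y‖ ^ 2) by ring,
        Real.sqrt_mul (sq_nonneg _), Real.sqrt_sq st.κ_pos.le]
    rw [heq]
    apply Real.sqrt_le_sqrt
    nlinarith
  have hcn : cNorm (cSmul z (x, y)) ≤ Real.sqrt 2 * ‖z‖ * rNorm (x, y) :=
    cNorm_cSmul_le z (x, y)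
  have hA : st.κ / Real.sqrt 2 * cNorm (cSmul z (x, y)) ≤ ‖z₀‖ := by
    have h2 : (0:ℝ) < Real.sqrt 2 := by positivity
    have hk2 : 0 < st.κ / Real.sqrt 2 := div_pos st.κ_pos h2
    calc st.κ / Real.sqrt 2 * cNorm (cSmul z (x, y))
        ≤ st.κ / Real.sqrt 2 * (Real.sqrt 2 * ‖z‖ * rNorm (x, y)) := by
          exact mul_le_mul_of_nonneg_left hcn hk2.le
      _ = ‖z‖ * (st.κ * rNorm (x, y)) := by
          field_simp
      _ ≤ ‖z‖ * Real.sqrt ((st.mm x) ^ 2 + (st.mm y) ^ 2) :=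
          mul_le_mul_of_nonneg_left hsq (norm_nonneg z)
      _ = ‖z₀‖ := hnorm.symm
  have hfin : ‖w‖ * ‖ℓ g‖ = ‖ℓ (cSmul z (x, y))‖ := by
    rw [hwdef, norm_div, div_mul_cancel₀ _ (norm_ne_zero_iff.mpr hℓg)]
  calc Real.exp (-d) * (st.κ / Real.sqrt 2) * cNorm (cSmul z (x, y)) * ‖ℓ g‖
      = Real.exp (-d) * (st.κ / Real.sqrt 2 * cNorm (cSmul z (x, y))) * ‖ℓ g‖ := by ring
    _ ≤ Real.exp (-d) * ‖z₀‖ * ‖ℓ g‖ := by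
        have := mul_le_mul_of_nonneg_left hA (Real.exp_pos (-d)).le
        exact mul_le_mul_of_nonneg_right this (norm_nonneg _)
    _ ≤ ‖w‖ * ‖ℓ g‖ := mul_le_mul_of_nonneg_right hB (norm_nonneg _)
    _ = ‖ℓ (cSmul z (x, y))‖ := hfin

end ConeSetup
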